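/- Let δ₁ : Matrix (Fin M₁) (Fin M₁) (ZMod 2) and δ₂ : Matrix (Fin M₂) (Fin M₂) (ZMod 2) satisfy δ₁·δ₁ = 0 and δ₂·δ₂ = 0, and let ∂ be the linear map on Matrix (Fin M₁) (Fin M₂) (ZMod 2) given by ∂ψ = δ₁·ψ + ψ·δ₂ᵀ. Then the homological dimension of ∂ is the product of those of δ₁ and δ₂: M₁·M₂ − 2·finrank(range ∂) = (M₁ − 2·rank δ₁)·(M₂ − 2·rank δ₂). -/

import Mathlib

open Matrix Module LinearMap

section Aux

variable {F : Type*} [Field F] {V₁ V₂ : Type*} [AddCommGroup V₁] [Module F V₁]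
  [AddCommGroup V₂] [Module F V₂]

namespace KunnethAux

/-- Embedding of `Hom(V₂/T, S)` into `Hom(V₂, V₁)`. -/
noncomputable def E (S : Submodule F V₁) (T : Submodule F V₂) :
    ((V₂ ⧸ T) →ₗ[F] S) →ₗ[F] (V₂ →ₗ[F] V₁) where
  toFun χ := S.subtype ∘ₗ χ ∘ₗ T.mkQ
  map_add' := by intros; ext; simp
  map_smul' := by intros; ext; simp

lemma E_apply (S : Submodule F V₁) (T : Submodule F V₂) (χ : (V₂ ⧸ T) →ₗ[F] S) (x : V₂) :
    E S T χ x = (χ (T.mkQ x) : V₁) := rfl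

lemma E_injective (S : Submodule F V₁) (T : Submodule F V₂) : Function.Injective (E S T) := by
  intro χ₁ χ₂ h
  ext x
  exact congrArg (fun (L : V₂ →ₗ[F] V₁) => L x) h

lemma mem_range_E {S : Submodule F V₁} {T : Submodule F V₂} {h : V₂ →ₗ[F] V₁}
    (h1 : ∀ x ∈ T, h x = 0) (h2 : ∀ x, h x ∈ S) :
    h ∈ LinearMap.range (E S T) := by
  refine ⟨T.liftQ (h.codRestrict S h2) ?_, ?_⟩
  · intro x hx
    exact Subtype.ext (h1 x hx)
  · ext x
    simp [E_apply]; rfl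

lemma range_E_spec {S : Submodule F V₁} {T : Submodule F V₂} {h : V₂ →ₗ[F] V₁}
    (hh : h ∈ LinearMap.range (E S T)) :
    (∀ x ∈ T, h x = 0) ∧ (∀ x, h x ∈ S) := by
  obtain ⟨χ, rfl⟩ := hh
  constructor
  · intro x hx
    rw [E_apply]
    have : T.mkQ x = 0 := by simpa [Submodule.mkQ_apply, Submodule.Quotient.mk_eq_zero] using hx
    rw [this, map_zero]; rfl
  · intro x
    exact (χ (T.mkQ x)).2

lemma finrank_range_E [FiniteDimensional F V₁] [FiniteDimensional F V₂]
    (S : Submodule F V₁) (T : Submodule F V₂) :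
    finrank F (LinearMap.range (E S T)) = finrank F (V₂ ⧸ T) * finrank F S := by
  rw [LinearMap.finrank_range_of_inj (E_injective S T), Module.finrank_linearMap]

/-- The product boundary operator on `Hom(V₂, V₁)`. -/
def Omega (f : V₁ →ₗ[F] V₁) (g : V₂ →ₗ[F] V₂) :
    (V₂ →ₗ[F] V₁) →ₗ[F] (V₂ →ₗ[F] V₁) where
  toFun L := f ∘ₗ L + L ∘ₗ g
  map_add' := by intros; ext; simp; abel
  map_smul' := by intros; ext; simp

lemma Omega_apply (f : V₁ →ₗ[F] V₁) (g : V₂ →ₗ[F] V₂) (L : V₂ →ₗ[F] V₁) :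
    Omega f g L = f ∘ₗ L + L ∘ₗ g := rfl

variable [FiniteDimensional F V₁] [FiniteDimensional F V₂]

/-- Existence of a linear section of `f` on its range. -/
lemma exists_section (f : V₁ →ₗ[F] V₁) :
    ∃ s : (LinearMap.range f) →ₗ[F] V₁, ∀ y : LinearMap.range f, f (s y) = (y : V₁) := by
  obtain ⟨s, hs⟩ := f.rangeRestrict.exists_rightInverse_of_surjective
    (LinearMap.range_eq_top.2 f.surjective_rangeRestrict)
  refine ⟨s, fun y => ?_⟩
  have : f.rangeRestrict (s y) = y := by
    have h := DFunLike.congr_fun hs y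
    exact h
  calc f (s y) = (f.rangeRestrict (s y) : V₁) := rfl
  _ = (y : V₁) := by rw [this]

/-- Given `χ : V₂/ker g → range f`, there is `L` with `f ∘ L ∘ g = E χ`. -/
lemma exists_middle (f : V₁ →ₗ[F] V₁) (g : V₂ →ₗ[F] V₂)
    (χ : (V₂ ⧸ LinearMap.ker g) →ₗ[F] (LinearMap.range f)) :
    ∃ L : V₂ →ₗ[F] V₁, f ∘ₗ L ∘ₗ g = E (LinearMap.range f) (LinearMap.ker g) χ := by
  obtain ⟨s, hs⟩ := exists_section f
  obtain ⟨q, hq⟩ := (LinearMap.range g).exists_isCompl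
  set π := (LinearMap.range g).projectionOnto q hq
  refine ⟨s ∘ₗ χ ∘ₗ g.quotKerEquivRange.symm.toLinearMap ∘ₗ π, ?_⟩
  ext x
  have hπ : π (g x) = ⟨g x, LinearMap.mem_range_self g x⟩ := by
    have := Submodule.linearProjOfIsCompl_apply_left hq (⟨g x, LinearMap.mem_range_self g x⟩ :
      LinearMap.range g)
    simpa using this
  have hsymm : g.quotKerEquivRange.symm ⟨g x, LinearMap.mem_range_self g x⟩ =
      (LinearMap.ker g).mkQ x := g.quotKerEquivRange_symm_apply_image x _
  simp only [LinearMap.comp_apply, LinearEquiv.coe_coe, hπ, hsymm, E_apply]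
  exact hs _

lemma omega_sq_zero {f : V₁ →ₗ[F] V₁} {g : V₂ →ₗ[F] V₂}
    (hf : f ∘ₗ f = 0) (hg : g ∘ₗ g = 0) (hchar : (2 : F) = 0) (L : V₂ →ₗ[F] V₁) :
    Omega f g (Omega f g L) = 0 := by
  rw [Omega_apply, Omega_apply]
  have : f ∘ₗ (f ∘ₗ L + L ∘ₗ g) + (f ∘ₗ L + L ∘ₗ g) ∘ₗ g
      = (2 : F) • (f ∘ₗ L ∘ₗ g) := by
    ext x
    simp only [LinearMap.add_apply, LinearMap.comp_apply, LinearMap.map_add,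
      LinearMap.smul_apply]
    have h1 : f (f (L x)) = 0 := by
      have := congrArg (fun (L' : V₁ →ₗ[F] V₁) => L' (L x)) hf; simpa using this
    have h2 : L (g (g x)) = 0 := by
      have := congrArg (fun (g' : V₂ →ₗ[F] V₂) => g' x) hg
      simp only [LinearMap.comp_apply, LinearMap.zero_apply] at this
      rw [this, map_zero]
    rw [h1, h2, zero_add, add_zero, two_smul]
  rw [this, hchar, zero_smul]

/-- Key dimension count. -/
lemma key (f : V₁ →ₗ[F] V₁) (g : V₂ →ₗ[F] V₂)
    (hf : f ∘ₗ f = 0) (hg : g ∘ₗ g = 0) (hchar : (2 : F) = 0) :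
    finrank F (LinearMap.range (Omega f g))
      + finrank F (LinearMap.range g) * finrank F (LinearMap.range f)
      + finrank F (LinearMap.ker g) * finrank F (LinearMap.ker f)
      = finrank F V₂ * finrank F V₁ := by
  set Ω := Omega f g
  set φ₀ : (LinearMap.ker Ω) →ₗ[F] (V₂ →ₗ[F] V₁) :=
    (LinearMap.llcomp F V₂ V₁ V₁ f) ∘ₗ (LinearMap.ker Ω).subtype with hφ₀
  -- range φ₀ = range (E (range f) (ker g))
  have hrange : LinearMap.range φ₀ = LinearMap.range (E (LinearMap.range f) (LinearMap.ker g)) := by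
    apply le_antisymm
    · rintro h ⟨⟨L, hL⟩, rfl⟩
      have hL' : f ∘ₗ L + L ∘ₗ g = 0 := hL
      apply mem_range_E
      · intro x hx
        have := congrArg (fun (L' : V₂ →ₗ[F] V₁) => L' x) hL'
        simp only [LinearMap.add_apply, LinearMap.comp_apply, LinearMap.zero_apply] at this
        have hgx : g x = 0 := hx
        simp only [hφ₀, LinearMap.comp_apply, Submodule.coe_subtype, LinearMap.llcomp_apply]
        rw [hgx, map_zero, add_zero] at this
        exact this
      · intro x
        exact LinearMap.mem_range_self f _
    · rintro h ⟨χ, rfl⟩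
      obtain ⟨L, hL⟩ := exists_middle f g χ
      refine ⟨⟨f ∘ₗ L + L ∘ₗ g, ?_⟩, ?_⟩
      · show Ω (f ∘ₗ L + L ∘ₗ g) = 0
        have : f ∘ₗ L + L ∘ₗ g = Ω L := rfl
        rw [this]
        exact omega_sq_zero hf hg hchar L
      · show f ∘ₗ (f ∘ₗ L + L ∘ₗ g) = _
        rw [← hL]
        ext x
        simp only [LinearMap.add_apply, LinearMap.comp_apply, LinearMap.map_add]
        have h1 : f (f (L x)) = 0 := by
          have := congrArg (fun (L' : V₁ →ₗ[F] V₁) => L' (L x)) hf; simpa using this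
        rw [h1, zero_add]
    -- ker φ₀
  have hker : (LinearMap.ker φ₀).map (LinearMap.ker Ω).subtype
      = LinearMap.range (E (LinearMap.ker f) (LinearMap.range g)) := by
    apply le_antisymm
    · rintro h ⟨⟨L, hL⟩, hmem, rfl⟩
      have hL' : f ∘ₗ L + L ∘ₗ g = 0 := hL
      have hfL : f ∘ₗ L = 0 := hmem
      have hLg : L ∘ₗ g = 0 := by
        have h' := hL'
        rw [hfL, zero_add] at h'
        exact h'
      apply mem_range_E
      · rintro x ⟨y, rfl⟩
        exact congrArg (fun (L' : V₂ →ₗ[F] V₁) => L' y) hLg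
      · intro x
        exact congrArg (fun (L' : V₂ →ₗ[F] V₁) => L' x) hfL
    · intro h hh
      obtain ⟨hvanish, hval⟩ := range_E_spec hh
      have hfL : f ∘ₗ h = 0 := by ext x; exact hval x
      have hLg : h ∘ₗ g = 0 := by
        ext x; exact hvanish (g x) (LinearMap.mem_range_self g x)
      have hΩ : Ω h = 0 := by
        show f ∘ₗ h + h ∘ₗ g = 0
        rw [hfL, hLg, add_zero]
      exact ⟨⟨h, hΩ⟩, hfL, rfl⟩
  have e1 : finrank F (LinearMap.range φ₀) + finrank F (LinearMap.ker φ₀)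
      = finrank F (LinearMap.ker Ω) := LinearMap.finrank_range_add_finrank_ker φ₀
  have e2 : finrank F (LinearMap.range Ω) + finrank F (LinearMap.ker Ω)
      = finrank F (V₂ →ₗ[F] V₁) := LinearMap.finrank_range_add_finrank_ker Ω
  have e3 : finrank F ((LinearMap.ker φ₀).map (LinearMap.ker Ω).subtype)
      = finrank F (LinearMap.ker φ₀) := Submodule.finrank_map_subtype_eq _ _
  have e4 : finrank F (LinearMap.range (E (LinearMap.range f) (LinearMap.ker g)))
      = finrank F (V₂ ⧸ LinearMap.ker g) * finrank F (LinearMap.range f) :=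
    finrank_range_E _ _
  have e5 : finrank F (LinearMap.range (E (LinearMap.ker f) (LinearMap.range g)))
      = finrank F (V₂ ⧸ LinearMap.range g) * finrank F (LinearMap.ker f) :=
    finrank_range_E _ _
  have e6 : finrank F (V₂ ⧸ LinearMap.ker g) = finrank F (LinearMap.range g) :=
    LinearEquiv.finrank_eq g.quotKerEquivRange
  have e7 : finrank F (V₂ ⧸ LinearMap.range g) + finrank F (LinearMap.range g)
      = finrank F V₂ := Submodule.finrank_quotient_add_finrank _
  have e8 : finrank F (LinearMap.range g) + finrank F (LinearMap.ker g) = finrank F V₂ :=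
    LinearMap.finrank_range_add_finrank_ker g
  have e9 : finrank F (V₂ →ₗ[F] V₁) = finrank F V₂ * finrank F V₁ :=
    Module.finrank_linearMap F F V₂ V₁
  have e10 : finrank F (V₂ ⧸ LinearMap.range g) = finrank F (LinearMap.ker g) := by omega
  rw [e9] at e2
  rw [hrange, e4, e6] at e1
  rw [hker, e5, e10] at e3
  omega

end KunnethAux

end Aux

/-- Künneth formula (dimension form): the homological dimension of the product boundary
map `∂ψ = δ₁ψ + ψδ₂ᵀ` is the product of the homological dimensions of `δ₁` and `δ₂`:
`M₁M₂ − 2·dim(range ∂) = (M₁ − 2 rank δ₁)(M₂ − 2 rank δ₂)`. -/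
theorem kunneth_homological_dimension (M₁ M₂ : ℕ)
    (δ₁ : Matrix (Fin M₁) (Fin M₁) (ZMod 2)) (δ₂ : Matrix (Fin M₂) (Fin M₂) (ZMod 2))
    (h₁ : δ₁ * δ₁ = 0) (h₂ : δ₂ * δ₂ = 0)
    (bnd : Matrix (Fin M₁) (Fin M₂) (ZMod 2) →ₗ[ZMod 2] Matrix (Fin M₁) (Fin M₂) (ZMod 2))
    (hbnd : ∀ ψ, bnd ψ = δ₁ * ψ + ψ * δ₂ᵀ) :
    (M₁ : ℤ) * (M₂ : ℤ) - 2 * (Module.finrank (ZMod 2) (LinearMap.range bnd) : ℤ) =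
      ((M₁ : ℤ) - 2 * (δ₁.rank : ℤ)) * ((M₂ : ℤ) - 2 * (δ₂.rank : ℤ)) := by
  classical
  set f : (Fin M₁ → (ZMod 2)) →ₗ[(ZMod 2)] (Fin M₁ → (ZMod 2)) := δ₁.mulVecLin with hfdef
  set g : (Fin M₂ → (ZMod 2)) →ₗ[(ZMod 2)] (Fin M₂ → (ZMod 2)) := δ₂ᵀ.mulVecLin with hgdef
  have hf : f ∘ₗ f = 0 := by
    rw [hfdef, ← Matrix.mulVecLin_mul, h₁, Matrix.mulVecLin_zero]
  have hg : g ∘ₗ g = 0 := by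
    rw [hgdef, ← Matrix.mulVecLin_mul, ← Matrix.transpose_mul, h₂, Matrix.transpose_zero,
      Matrix.mulVecLin_zero]
  set e : Matrix (Fin M₁) (Fin M₂) (ZMod 2) ≃ₗ[(ZMod 2)] ((Fin M₂ → (ZMod 2)) →ₗ[(ZMod 2)] (Fin M₁ → (ZMod 2))) :=
    Matrix.toLin' with hedef
  -- conjugation
  have hconj : ∀ ψ, e (bnd ψ) = KunnethAux.Omega f g (e ψ) := by
    intro ψ
    rw [hbnd ψ, KunnethAux.Omega_apply]
    have : e (δ₁ * ψ + ψ * δ₂ᵀ) = Matrix.toLin' (δ₁ * ψ) + Matrix.toLin' (ψ * δ₂ᵀ) := by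
      simp [hedef, map_add]
    rw [this, Matrix.toLin'_mul, Matrix.toLin'_mul]
    rfl
  have hrank_eq : finrank (ZMod 2) (LinearMap.range bnd)
      = finrank (ZMod 2) (LinearMap.range (KunnethAux.Omega f g)) := by
    have hcomp : (KunnethAux.Omega f g) ∘ₗ e.toLinearMap = e.toLinearMap ∘ₗ bnd :=
      LinearMap.ext fun ψ => (hconj ψ).symm
    have h1 : LinearMap.range ((KunnethAux.Omega f g) ∘ₗ e.toLinearMap)
        = LinearMap.range (KunnethAux.Omega f g) :=
      LinearMap.range_comp_of_range_eq_top _ (LinearMap.range_eq_top.2 e.surjective)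
    have h2 : LinearMap.range (e.toLinearMap ∘ₗ bnd)
        = Submodule.map e.toLinearMap (LinearMap.range bnd) := LinearMap.range_comp _ _
    rw [hcomp, h2] at h1
    rw [← h1]
    exact (LinearEquiv.finrank_map_eq e _).symm
  have hkey := KunnethAux.key f g hf hg (by decide)
  have hd1 : finrank (ZMod 2) (Fin M₁ → (ZMod 2)) = M₁ := by
    rw [Module.finrank_pi, Fintype.card_fin]
  have hd2 : finrank (ZMod 2) (Fin M₂ → (ZMod 2)) = M₂ := by
    rw [Module.finrank_pi, Fintype.card_fin]
  have hr1 : finrank (ZMod 2) (LinearMap.range f) = δ₁.rank := rfl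
  have hr2 : finrank (ZMod 2) (LinearMap.range g) = δ₂.rank := by
    rw [hgdef]
    show δ₂ᵀ.rank = δ₂.rank
    exact δ₂.rank_transpose
  have hn1 : δ₁.rank + finrank (ZMod 2) (LinearMap.ker f) = M₁ := by
    rw [← hr1, LinearMap.finrank_range_add_finrank_ker f, hd1]
  have hn2 : δ₂.rank + finrank (ZMod 2) (LinearMap.ker g) = M₂ := by
    rw [← hr2, LinearMap.finrank_range_add_finrank_ker g, hd2]
  rw [hd1, hd2, hr1, hr2] at hkey
  rw [hrank_eq]
  have hkeyZ : (finrank (ZMod 2) (LinearMap.range (KunnethAux.Omega f g)) : ℤ)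
      + (δ₂.rank : ℤ) * (δ₁.rank : ℤ)
      + (finrank (ZMod 2) (LinearMap.ker g) : ℤ) * (finrank (ZMod 2) (LinearMap.ker f) : ℤ)
      = (M₂ : ℤ) * (M₁ : ℤ) := by exact_mod_cast hkey
  have hn1Z : (δ₁.rank : ℤ) + (finrank (ZMod 2) (LinearMap.ker f) : ℤ) = (M₁ : ℤ) := by
    exact_mod_cast hn1
  have hn2Z : (δ₂.rank : ℤ) + (finrank (ZMod 2) (LinearMap.ker g) : ℤ) = (M₂ : ℤ) := by
    exact_mod_cast hn2
  linear_combination (-2 : ℤ) * hkeyZ + (2 * (finrank (ZMod 2) (LinearMap.ker g) : ℤ)) * hn1Z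
    + (2 * (M₁ : ℤ) - 2 * (δ₁.rank : ℤ)) * hn2Z
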